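/- arXiv:1410.2126 — 4 statements merged into one kernel-verified Lean document; each statement's English description precedes it below -/
import Mathlib

section
/- (Easy implication of the symmetry of values.) For every fractional ideal I of O and every v ∈ ℤ^p, if v ∈ val(I^∨) then Δ(γ − v − 1, val(I)) = ∅. -/
open scoped Classical

set_option synthInstance.maxHeartbeats 1000000
set_option maxHeartbeats 1000000

noncomputable section

/-- `K`, the total ring of fractions: the product of `p` copies of the field of
formal Laurent series over `ℂ`. -/
abbrev KK (p : ℕ) : Type := Fin p → LaurentSeries ℂ

lemma algebraMap_component {p : ℕ} (c : ℂ) (i : Fin p) :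
    algebraMap ℂ (KK p) c i = HahnSeries.single (0:ℤ) c := by
  rw [Pi.algebraMap_apply, HahnSeries.algebraMap_apply', PowerSeries.algebraMap_apply,
      Algebra.algebraMap_self, RingHom.id_apply, HahnSeries.ofPowerSeries_C, HahnSeries.C_apply]

lemma smul_eq_algebraMap_mul {p : ℕ} (c : ℂ) (x : KK p) :
    c • x = algebraMap ℂ (KK p) c * x := by
  funext i
  rw [Pi.smul_apply, Pi.mul_apply, algebraMap_component,
      HahnSeries.single_zero_mul_eq_smul]

/-- The `t`-adic order of a Laurent series, with `⊤` for the zero series. -/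
def valC (g : LaurentSeries ℂ) : WithTop ℤ :=
  if g = 0 then ⊤ else (g.order : WithTop ℤ)

/-- The value vector `val(g) = (val_1 g, …, val_p g)`. -/
def valVec {p : ℕ} (g : KK p) : Fin p → WithTop ℤ := fun i => valC (g i)

/-- The set `t^α·O~` of tuples of Laurent series whose `i`-th component has all
coefficients in degrees below `α i` equal to zero (equivalently, whose `i`-th
component has `t`-adic order at least `α i`), as a `ℂ`-submodule of `K`.
For `α = 0` this is `O~` itself. -/
def stdMod (p : ℕ) (α : Fin p → ℤ) : Submodule ℂ (KK p) where
  carrier := {g | ∀ i, ∀ j : ℤ, j < α i → (g i).coeff j = 0}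
  add_mem' := by
    intro a b ha hb i j hj
    simp [HahnSeries.coeff_add, ha i j hj, hb i j hj]
  zero_mem' := by
    intro i j hj
    simp
  smul_mem' := by
    intro c a ha i j hj
    simp [HahnSeries.coeff_smul, ha i j hj]

/-- The dual `S^∨ = {h ∈ K : h·S ⊆ O}` of a subset `S ⊆ K`, as a
`ℂ`-submodule of `K`. -/
def dualMod {p : ℕ} (O : Subalgebra ℂ (KK p)) (S : Set (KK p)) :
    Submodule ℂ (KK p) where
  carrier := {h | ∀ g ∈ S, h * g ∈ O}
  add_mem' := by
    intro a b ha hb g hg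
    simpa [add_mul] using add_mem (ha g hg) (hb g hg)
  zero_mem' := by
    intro g hg
    simpa using O.zero_mem
  smul_mem' := by
    intro c a ha g hg
    rw [smul_eq_algebraMap_mul, mul_assoc]
    exact O.mul_mem (O.algebraMap_mem c) (ha g hg)

/-- `val(S)`: values of the non-zerodivisors of `K` (elements all of whose
components are nonzero) belonging to `S`. -/
def vals {p : ℕ} (S : Set (KK p)) : Set (Fin p → ℤ) :=
  {v | ∃ g ∈ S, ∀ i, valC (g i) = (v i : WithTop ℤ)}

/-- `valbar(S)`: values of all elements of `S`. -/
def valsBar {p : ℕ} (S : Set (KK p)) : Set (Fin p → WithTop ℤ) :=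
  {v | ∃ g ∈ S, ∀ i, valC (g i) = v i}

/-- `I` is a fractional ideal of `O`: an `O`-stable `ℂ`-submodule of `K` which
is finitely generated over `O` and contains a non-zerodivisor of `K`. -/
def IsFracIdeal {p : ℕ} (O : Subalgebra ℂ (KK p)) (I : Submodule ℂ (KK p)) : Prop :=
  (∀ a ∈ O, ∀ x ∈ I, a * x ∈ I) ∧
  (∃ s : Finset (KK p), (↑s : Set (KK p)) ⊆ (I : Set (KK p)) ∧
    ∀ x ∈ I, ∃ a : KK p → KK p, (∀ g ∈ s, a g ∈ O) ∧ x = ∑ g ∈ s, a g * g) ∧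
  (∃ g ∈ I, ∀ i, g i ≠ 0)

/-- `Δ_i(v, M)`. -/
def DeltaI {p : ℕ} (i : Fin p) (v : Fin p → ℤ) (M : Set (Fin p → ℤ)) :
    Set (Fin p → ℤ) :=
  {α ∈ M | α i = v i ∧ ∀ j, j ≠ i → v j < α j}

/-- `Δ(v, M) = ⋃ i, Δ_i(v, M)`. -/
def DeltaSet {p : ℕ} (v : Fin p → ℤ) (M : Set (Fin p → ℤ)) : Set (Fin p → ℤ) :=
  ⋃ i : Fin p, DeltaI i v M

/-- `Λ_i(v, M)`. -/
def LamSet {p : ℕ} (i : Fin p) (v : Fin p → ℤ) (M : Set (Fin p → ℤ)) :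
    Set (Fin p → ℤ) :=
  {α ∈ M | α i = v i ∧ v ≤ α}

/-- `dim_ℂ (B / A)`: the dimension of the image of `B` in `K ⧸ A`
(which is canonically `B/(A ∩ B)`). -/
def qdim {p : ℕ} (A B : Submodule ℂ (KK p)) : ℕ :=
  Module.finrank ℂ ↥(B.map A.mkQ)

/-- `c_I(v) = dim_ℂ (I_v / I_{v+1})`, where `I_v = {g ∈ I : val g ≥ v}`. -/
def cI {p : ℕ} (I : Submodule ℂ (KK p)) (v : Fin p → ℤ) : ℕ :=
  qdim (I ⊓ stdMod p (v + 1)) (I ⊓ stdMod p v)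

/-- `α_I(v) = Σ_{J ⊆ {1,…,p}} (−1)^{p−|J|} c_I(v − e_J)`. -/
def alphaI {p : ℕ} (I : Submodule ℂ (KK p)) (v : Fin p → ℤ) : ℤ :=
  ∑ J : Finset (Fin p),
    (-1 : ℤ) ^ (p - J.card) * cI I (fun j => v j - if j ∈ J then 1 else 0)

/-- `O` itself, as a `ℂ`-submodule of `K`. -/
def algSubmodule {p : ℕ} (O : Subalgebra ℂ (KK p)) : Submodule ℂ (KK p) where
  carrier := O
  add_mem' := fun ha hb => O.add_mem ha hb
  zero_mem' := O.zero_mem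
  smul_mem' := fun c x hx => by
    rw [smul_eq_algebraMap_mul]
    exact O.mul_mem (O.algebraMap_mem c) hx

lemma valC_ne_top {g : LaurentSeries ℂ} {n : ℤ} (h : valC g = (n : WithTop ℤ)) : g ≠ 0 := by
  intro h0
  rw [valC, if_pos h0] at h
  exact (WithTop.top_ne_coe h).elim

lemma valC_mul {a b : LaurentSeries ℂ} {m n : ℤ} (ha : valC a = (m : WithTop ℤ))
    (hb : valC b = (n : WithTop ℤ)) : valC (a * b) = ((m + n : ℤ) : WithTop ℤ) := by
  have ha' := valC_ne_top ha
  have hb' := valC_ne_top hb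
  rw [valC, if_neg ha'] at ha
  rw [valC, if_neg hb'] at hb
  rw [valC, if_neg (mul_ne_zero ha' hb'), HahnSeries.order_mul ha' hb']
  push_cast
  rw [ha, hb]

/-- **Easy implication of the symmetry of values.**  If `v ∈ val(I^∨)` then
`Δ(γ − v − 1, val I) = ∅`. -/
theorem easy_implication_symmetry {p : ℕ} (hp : 1 ≤ p) (O : Subalgebra ℂ (KK p))
    (hO : (O : Set (KK p)) ⊆ (stdMod p 0 : Set (KK p)))
    (γ : Fin p → ℕ)
    (hγ : dualMod O (stdMod p 0 : Set (KK p)) = stdMod p (fun i => (γ i : ℤ)))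
    (hG3 : DeltaSet (fun i => (γ i : ℤ) - 1) (vals (O : Set (KK p))) = ∅)
    (I : Submodule ℂ (KK p)) (hI : IsFracIdeal O I) (v : Fin p → ℤ)
    (hv : v ∈ vals ((dualMod O (I : Set (KK p)) : Submodule ℂ (KK p)) : Set (KK p))) :
    DeltaSet (fun i => (γ i : ℤ) - v i - 1) (vals (I : Set (KK p))) = ∅ := by
  ext β
  simp only [Set.mem_empty_iff_false, iff_false]
  intro hβ
  rw [DeltaSet, Set.mem_iUnion] at hβ
  obtain ⟨i, hβM, hβi, hβj⟩ := hβ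
  obtain ⟨g, hgI, hvg⟩ := hβM
  obtain ⟨h, hh, hvh⟩ := hv
  have key : (fun j => v j + β j) ∈ DeltaI i (fun i => (γ i : ℤ) - 1)
      (vals (O : Set (KK p))) := by
    refine ⟨⟨h * g, hh g hgI, fun j => valC_mul (hvh j) (hvg j)⟩, ?_, ?_⟩
    · have := hβi
      simp only at this ⊢
      omega
    · intro j hj
      have := hβj j hj
      simp only at this ⊢
      omega
  have hmem : (fun j => v j + β j) ∈
      DeltaSet (fun i => (γ i : ℤ) - 1) (vals (O : Set (KK p))) :=
    Set.mem_iUnion.2 ⟨i, key⟩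
  rw [hG3] at hmem
  exact hmem
end
end

section
/- Let I be a fractional ideal of O and set 𝒱 = {v ∈ ℤ^p : Δ(γ − v − 1, val(I)) = ∅}. For every w ∈ ℤ^p and i ∈ {1,…,p}: if Λ_i(w, 𝒱) ≠ ∅ then Λ_i(γ − w − e_i, val(I)) = ∅. -/
open scoped Classical

set_option synthInstance.maxHeartbeats 1000000
set_option maxHeartbeats 1000000

noncomputable section

/-- If `Λ_i(w, 𝒱) ≠ ∅`, where `𝒱 = {v : Δ(γ−v−1, val I) = ∅}`, then
`Λ_i(γ − w − e_i, val I) = ∅`. -/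
theorem lambda_V_implies_lambda_empty {p : ℕ} (hp : 1 ≤ p) (O : Subalgebra ℂ (KK p))
    (hO : (O : Set (KK p)) ⊆ (stdMod p 0 : Set (KK p)))
    (γ : Fin p → ℕ)
    (hγ : dualMod O (stdMod p 0 : Set (KK p)) = stdMod p (fun i => (γ i : ℤ)))
    (I : Submodule ℂ (KK p)) (hI : IsFracIdeal O I)
    (w : Fin p → ℤ) (i : Fin p)
    (h : (LamSet i w
      {v : Fin p → ℤ |
        DeltaSet (fun k => (γ k : ℤ) - v k - 1) (vals (I : Set (KK p))) = ∅}).Nonempty) :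
    LamSet i ((fun k => (γ k : ℤ) - w k) - Pi.single i 1) (vals (I : Set (KK p))) = ∅ := by
  obtain ⟨v, hvV, hvi, hwv⟩ := h
  rw [Set.eq_empty_iff_forall_notMem]
  rintro α ⟨hαI, hαi, hαge⟩
  have hΔ : DeltaSet (fun k => (γ k : ℤ) - v k - 1) (vals (I : Set (KK p))) = ∅ := hvV
  have : α ∈ DeltaSet (fun k => (γ k : ℤ) - v k - 1) (vals (I : Set (KK p))) := by
    refine Set.mem_iUnion.2 ⟨i, hαI, ?_, ?_⟩
    · have h0 : α i = (γ i : ℤ) - w i - 1 := by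
        simpa [Pi.sub_apply] using hαi
      show α i = (γ i : ℤ) - v i - 1
      rw [h0, hvi]
    · intro j hji
      have h1 := hαge j
      simp only [Pi.sub_apply, Pi.single_eq_of_ne hji] at h1
      have h3 : w j ≤ v j := hwv j
      show (γ j : ℤ) - v j - 1 < α j
      linarith
  rw [hΔ] at this
  exact this
end
end

section
/- (The Poincaré series of a fractional ideal is a polynomial.) Let I be a fractional ideal of O and ν, λ ∈ ℤ^p with ν + ℕ^p ⊆ val(I) ⊆ λ + ℕ^p. Then α_I(v) = 0 for every v ∈ ℤ^p that does not satisfy λ ≤ v ≤ ν; consequently the Laurent series P_I(t) = Σ_{v ∈ ℤ^p} α_I(v) t^v has finite support. -/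
open scoped Classical

set_option synthInstance.maxHeartbeats 1000000
set_option maxHeartbeats 1000000

noncomputable section

-- ====== auxiliary lemmas ======

lemma valC_eq_int {g : LaurentSeries ℂ} {n : ℤ} (h : valC g = (n : WithTop ℤ)) :
    g ≠ 0 ∧ g.order = n := by
  unfold valC at h
  split_ifs at h with h0
  · exact absurd h (by simp)
  · exact ⟨h0, by exact_mod_cast h⟩

lemma valC_of_ne {g : LaurentSeries ℂ} (h : g ≠ 0) : valC g = (g.order : WithTop ℤ) :=
  if_neg h

lemma mem_stdMod {p : ℕ} {α : Fin p → ℤ} {g : KK p} :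
    g ∈ stdMod p α ↔ ∀ i, ∀ j : ℤ, j < α i → (g i).coeff j = 0 := Iff.rfl

lemma add_ne_zero_order {x y : LaurentSeries ℂ} (hx : x ≠ 0) (h : x.order < y.order) :
    x + y ≠ 0 ∧ (x + y).order = x.order := by
  have hc : (x + y).coeff x.order = x.coeff x.order := by
    rw [HahnSeries.coeff_add, HahnSeries.coeff_eq_zero_of_lt_order h, add_zero]
  have hne : x + y ≠ 0 := fun h0 => (mt HahnSeries.coeff_order_eq_zero.mp hx) (by
    rw [← hc, h0, HahnSeries.coeff_zero])
  refine ⟨hne, le_antisymm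
    (HahnSeries.order_le_of_coeff_ne_zero (hc ▸ (mt HahnSeries.coeff_order_eq_zero.mp hx))) ?_⟩
  have := HahnSeries.min_order_le_order_add (x := x) (y := y) hne
  simpa [min_eq_left h.le] using this

section Main

variable {p : ℕ} (I : Submodule ℂ (KK p)) (ν lam : Fin p → ℤ)
variable (hν : ∀ w : Fin p → ℤ, ν ≤ w → w ∈ vals (I : Set (KK p)))
variable (hlam : ∀ w ∈ vals (I : Set (KK p)), lam ≤ w)

include hν in
lemma exists_witness (w : Fin p → ℤ) (hw : ν ≤ w) :
    ∃ g ∈ I, (∀ i, g i ≠ 0) ∧ (∀ i, (g i).order = w i) := by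
  obtain ⟨g, hgI, hval⟩ := hν w hw
  exact ⟨g, hgI, fun i => (valC_eq_int (hval i)).1, fun i => (valC_eq_int (hval i)).2⟩

include hν hlam in
lemma order_ge_lam {g : KK p} (hg : g ∈ I) (i : Fin p) (hgi : g i ≠ 0) :
    lam i ≤ (g i).order := by
  set w : Fin p → ℤ := fun j => max (ν j) ((g j).order + 1) with hw
  obtain ⟨f, hfI, hf0, hford⟩ := exists_witness I ν hν w (fun j => le_max_left _ _)
  have key : ∀ j, g j ≠ 0 → ((g + f) j ≠ 0 ∧ ((g + f) j).order = (g j).order) := by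
    intro j hj
    have : (g j).order < (f j).order := by
      rw [hford j]
      simp only [hw]
      exact lt_of_lt_of_le (lt_add_one _) (le_max_right _ _)
    simpa using add_ne_zero_order hj this
  have hmem : (fun j => if g j = 0 then w j else (g j).order) ∈ vals (I : Set (KK p)) := by
    refine ⟨g + f, I.add_mem hg hfI, fun j => ?_⟩
    by_cases hj : g j = 0
    · have : (g + f) j = f j := by simp [hj]
      rw [this, valC_of_ne (hf0 j), hford j]
      simp [hj]
    · rw [valC_of_ne (key j hj).1, (key j hj).2]
      simp [hj]
  have := hlam _ hmem i
  simpa [hgi] using this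

/-- membership of coordinates below a value -/
lemma stdMod_mono {p : ℕ} {α β : Fin p → ℤ} (h : α ≤ β) : stdMod p β ≤ stdMod p α :=
  fun _ hg i j hj => hg i j (lt_of_lt_of_le hj (h i))

include hν hlam in
lemma inf_stdMod_eq_of_lt_lam (i : Fin p) (w w' : Fin p → ℤ)
    (hww' : ∀ j, j ≠ i → w' j = w j) (hwi : w' i = w i + 1) (hwlam : w i < lam i) :
    I ⊓ stdMod p w = I ⊓ stdMod p w' := by
  have hle : w ≤ w' := by
    refine Pi.le_def.mpr fun j => ?_
    by_cases hj : j = i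
    · subst hj; rw [hwi]; omega
    · rw [hww' j hj]
  refine le_antisymm ?_ (inf_le_inf_left I (stdMod_mono hle))
  rintro g ⟨hgI, hgstd⟩
  refine ⟨hgI, fun j k hk => ?_⟩
  by_cases hj : j = i
  · subst hj
    by_cases hg0 : g j = 0
    · simp [hg0]
    · refine HahnSeries.coeff_eq_zero_of_lt_order ?_
      have := order_ge_lam I ν lam hν hlam hgI j hg0
      rw [hwi] at hk; omega
  · exact hgstd j k (by rw [hww' j hj] at hk; exact hk)

/-- the coefficient extraction map -/
def psi (p : ℕ) (u : Fin p → ℤ) : KK p →ₗ[ℂ] (Fin p → ℂ) where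
  toFun g := fun i => (g i).coeff (u i)
  map_add' a b := funext fun i => by simp [HahnSeries.coeff_add]
  map_smul' c a := funext fun i => by simp [HahnSeries.coeff_smul]

@[simp] lemma psi_apply {p : ℕ} (u : Fin p → ℤ) (g : KK p) (i : Fin p) :
    psi p u g i = (g i).coeff (u i) := rfl

lemma stdMod_succ {p : ℕ} (u : Fin p → ℤ) :
    stdMod p (u + 1) = stdMod p u ⊓ LinearMap.ker (psi p u) := by
  ext g
  simp only [Submodule.mem_inf, LinearMap.mem_ker, mem_stdMod, Pi.add_apply, Pi.one_apply]
  constructor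
  · intro h
    refine ⟨fun i j hj => h i j (by omega), funext fun i => h i (u i) (by omega)⟩
  · rintro ⟨h1, h2⟩ i j hj
    rcases lt_or_eq_of_le (by omega : j ≤ u i) with h | h
    · exact h1 i j h
    · subst h; exact congrFun h2 i

lemma qdim_eq_finrank_map {p : ℕ} (B : Submodule ℂ (KK p)) {W : Type}
    [AddCommGroup W] [Module ℂ W] (φ : KK p →ₗ[ℂ] W) :
    qdim (B ⊓ LinearMap.ker φ) B = Module.finrank ℂ ↥(B.map φ) := by
  set A := B ⊓ LinearMap.ker φ with hA
  have hAle : A ≤ LinearMap.ker φ := inf_le_right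
  set F : (KK p ⧸ A) →ₗ[ℂ] W := A.liftQ φ hAle with hF
  set F' : ↥(B.map A.mkQ) →ₗ[ℂ] W := F.comp (B.map A.mkQ).subtype with hF'
  have hFmk : ∀ b : KK p, F (A.mkQ b) = φ b := by
    intro b
    rw [hF, ← LinearMap.comp_apply, Submodule.liftQ_mkQ]
  have hrange : LinearMap.range F' = B.map φ := by
    rw [hF', LinearMap.range_comp, Submodule.range_subtype, ← Submodule.map_comp]
    rw [hF, Submodule.liftQ_mkQ]
  have hinj : Function.Injective F' := by
    rw [← LinearMap.ker_eq_bot, eq_bot_iff]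
    intro x hk
    obtain ⟨b, hbB, hbx⟩ := x.2
    have hφb : φ b = 0 := by
      rw [← hFmk b, hbx]
      exact LinearMap.mem_ker.mp hk
    have hbA : b ∈ A := ⟨hbB, LinearMap.mem_ker.mpr hφb⟩
    have hx0 : (x : KK p ⧸ A) = 0 := by
      rw [← hbx, Submodule.mkQ_apply, Submodule.Quotient.mk_eq_zero]
      exact hbA
    rw [Submodule.mem_bot]
    exact Subtype.ext hx0
  have e1 : Module.finrank ℂ ↥(B.map A.mkQ) = Module.finrank ℂ ↥(LinearMap.range F') :=
    LinearEquiv.finrank_eq (LinearEquiv.ofInjective F' hinj)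
  unfold qdim
  rw [e1, hrange]

lemma cI_eq_finrank {p : ℕ} (I : Submodule ℂ (KK p)) (u : Fin p → ℤ) :
    cI I u = Module.finrank ℂ ↥((I ⊓ stdMod p u).map (psi p u)) := by
  rw [cI, stdMod_succ, ← inf_assoc, qdim_eq_finrank_map]

include hν in
lemma exists_special {x : Fin p → ℤ} {i : Fin p} (hx : ν i ≤ x i) :
    ∃ h, h ∈ I ∧ h ∈ stdMod p x ∧ ∃ c : ℂ, c ≠ 0 ∧ psi p x h = c • (Pi.single i 1 : Fin p → ℂ) := by
  set w : Fin p → ℤ := fun j => if j = i then x i else max (x j + 1) (ν j) with hwdef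
  obtain ⟨h, hhI, hh0, hhord⟩ := exists_witness I ν hν w (by
    intro j; by_cases hj : j = i
    · subst hj; simpa [hwdef] using hx
    · simp only [hwdef, if_neg hj]; exact le_max_right _ _)
  have hcoeff_zero : ∀ j, ∀ k : ℤ, k < w j → (h j).coeff k = 0 := by
    intro j k hk
    exact HahnSeries.coeff_eq_zero_of_lt_order (by rw [hhord j]; exact hk)
  refine ⟨h, hhI, ?_, (h i).coeff (x i), ?_, ?_⟩
  · intro j k hk
    refine hcoeff_zero j k ?_
    by_cases hj : j = i
    · subst hj; simpa [hwdef] using hk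
    · simp only [hwdef, if_neg hj]; omega
  · have : (h i).order = x i := by rw [hhord i]; simp [hwdef]
    rw [← this]; exact (mt HahnSeries.coeff_order_eq_zero.mp (hh0 i))
  · funext j
    by_cases hj : j = i
    · subst hj; simp
    · have : (h j).coeff (x j) = 0 := hcoeff_zero j (x j) (by simp only [hwdef, if_neg hj]; omega)
      simp [this, Pi.single_apply, hj]

/-- abbreviation for the hyperplane -/
def hyp (p : ℕ) (i : Fin p) : Submodule ℂ (Fin p → ℂ) :=
  LinearMap.ker (LinearMap.proj i : (Fin p → ℂ) →ₗ[ℂ] ℂ)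

@[simp] lemma mem_hyp {p : ℕ} {i : Fin p} {y : Fin p → ℂ} : y ∈ hyp p i ↔ y i = 0 := Iff.rfl

lemma finrank_decomp {p : ℕ} (i : Fin p) (V : Submodule ℂ (Fin p → ℂ))
    (hs : (Pi.single i 1 : Fin p → ℂ) ∈ V) :
    Module.finrank ℂ ↥V = Module.finrank ℂ ↥(V ⊓ hyp p i) + 1 := by
  have hd : V = (V ⊓ hyp p i) ⊔ Submodule.span ℂ {(Pi.single i 1 : Fin p → ℂ)} := by
    refine le_antisymm ?_ (sup_le inf_le_left (by
      rw [Submodule.span_le, Set.singleton_subset_iff]; exact hs))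
    intro y hy
    have h1 : y - y i • (Pi.single i 1 : Fin p → ℂ) ∈ V ⊓ hyp p i := by
      refine ⟨V.sub_mem hy (V.smul_mem _ hs), ?_⟩
      simp only [SetLike.mem_coe, mem_hyp]
      simp
    have h2 : y i • (Pi.single i 1 : Fin p → ℂ) ∈ Submodule.span ℂ {(Pi.single i 1 : Fin p → ℂ)} :=
      Submodule.smul_mem _ _ (Submodule.mem_span_singleton_self _)
    have : y = (y - y i • (Pi.single i 1 : Fin p → ℂ)) + y i • (Pi.single i 1 : Fin p → ℂ) := by abel
    rw [this]
    exact Submodule.add_mem_sup h1 h2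
  have hsingle_ne : (Pi.single i 1 : Fin p → ℂ) ≠ 0 := by
    intro h0
    have := congrFun h0 i
    simp at this
  have hinf : (V ⊓ hyp p i) ⊓ Submodule.span ℂ {(Pi.single i 1 : Fin p → ℂ)} = ⊥ := by
    rw [eq_bot_iff]
    rintro x ⟨⟨_, hxH⟩, hxS⟩
    obtain ⟨c, rfl⟩ := Submodule.mem_span_singleton.mp hxS
    simp only [SetLike.mem_coe, mem_hyp] at hxH
    simp only [Pi.smul_apply, Pi.single_eq_same, smul_eq_mul, mul_one] at hxH
    simp [hxH]
  have hfr := Submodule.finrank_sup_add_finrank_inf_eq (V ⊓ hyp p i)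
    (Submodule.span ℂ {(Pi.single i 1 : Fin p → ℂ)})
  rw [hinf, finrank_span_singleton hsingle_ne, ← hd] at hfr
  simp only [finrank_bot, add_zero] at hfr
  omega

include hν in
lemma case2 {u : Fin p → ℤ} {i : Fin p} (h2 : ν i < u i) :
    cI I (fun j => u j - if j = i then 1 else 0) = cI I u := by
  set u' : Fin p → ℤ := fun j => u j - if j = i then 1 else 0 with hu'def
  have hu'i : u' i = u i - 1 := by simp [u']
  have hu'j : ∀ j, j ≠ i → u' j = u j := fun j hj => by simp [u', hj]
  rw [cI_eq_finrank, cI_eq_finrank]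
  set V := (I ⊓ stdMod p u).map (psi p u) with hV
  set V' := (I ⊓ stdMod p u').map (psi p u') with hV'
  -- single i 1 belongs to both
  obtain ⟨h, hhI, hhstd, c, hc0, hpsi⟩ := exists_special I ν hν (x := u) (i := i) (by omega)
  obtain ⟨h', hh'I, hh'std, c', hc'0, hpsi'⟩ := exists_special I ν hν (x := u') (i := i) (by omega)
  have hsV : (Pi.single i 1 : Fin p → ℂ) ∈ V := by
    have hmem : psi p u h ∈ V := ⟨h, ⟨hhI, hhstd⟩, rfl⟩
    have : (Pi.single i 1 : Fin p → ℂ) = c⁻¹ • psi p u h := by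
      rw [hpsi, smul_smul, inv_mul_cancel₀ hc0, one_smul]
    rw [this]; exact V.smul_mem _ hmem
  have hsV' : (Pi.single i 1 : Fin p → ℂ) ∈ V' := by
    have hmem : psi p u' h' ∈ V' := ⟨h', ⟨hh'I, hh'std⟩, rfl⟩
    have : (Pi.single i 1 : Fin p → ℂ) = c'⁻¹ • psi p u' h' := by
      rw [hpsi', smul_smul, inv_mul_cancel₀ hc'0, one_smul]
    rw [this]; exact V'.smul_mem _ hmem
  -- intersections with the hyperplane agree
  have hVH : V ⊓ hyp p i = V' ⊓ hyp p i := by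
    apply le_antisymm
    · rintro y ⟨⟨g, ⟨hgI, hgstd⟩, rfl⟩, hyH⟩
      simp only [SetLike.mem_coe, mem_hyp, psi_apply] at hyH
      have hstd' : g ∈ stdMod p u' := by
        intro j k hk
        refine hgstd j k ?_
        by_cases hj : j = i
        · subst hj; rw [hu'i] at hk; omega
        · rwa [hu'j j hj] at hk
      have heq : psi p u' g = psi p u g := by
        funext j
        by_cases hj : j = i
        · subst hj
          simp only [psi_apply, hu'i]
          rw [hgstd j (u j - 1) (by omega), hyH]
        · simp only [psi_apply, hu'j j hj]
      exact ⟨⟨g, ⟨hgI, hstd'⟩, heq⟩, by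
        simp only [SetLike.mem_coe, mem_hyp, psi_apply]; exact hyH⟩
    · rintro y ⟨⟨g, ⟨hgI, hgstd⟩, rfl⟩, hyH⟩
      simp only [SetLike.mem_coe, mem_hyp, psi_apply, hu'i] at hyH
      have hgstdu : g ∈ stdMod p u := by
        intro j k hk
        by_cases hj : j = i
        · subst hj
          rcases lt_or_eq_of_le (by omega : k ≤ u j - 1) with hlt | hkeq
          · exact hgstd j k (by rw [hu'i]; exact hlt)
          · subst hkeq; exact hyH
        · exact hgstd j k (by rw [hu'j j hj]; exact hk)
      have hhj : ∀ j, j ≠ i → (h j).coeff (u j) = 0 := by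
        intro j hj
        have := congrFun hpsi j
        simp only [psi_apply, Pi.smul_apply, Pi.single_apply, if_neg hj, smul_eq_mul,
          mul_zero] at this
        exact this
      have hhc : (h i).coeff (u i) = c := by
        have := congrFun hpsi i
        simp only [psi_apply, Pi.smul_apply, Pi.single_eq_same, smul_eq_mul, mul_one] at this
        exact this
      have heq : psi p u (g - ((g i).coeff (u i) / c) • h) = psi p u' g := by
        funext j
        by_cases hj : j = i
        · subst hj
          simp only [psi_apply, Pi.sub_apply, Pi.smul_apply, HahnSeries.coeff_sub,
            HahnSeries.coeff_smul, hhc, smul_eq_mul, hu'i, hyH]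
          rw [div_mul_cancel₀ _ hc0, sub_self]
        · simp only [psi_apply, Pi.sub_apply, Pi.smul_apply, HahnSeries.coeff_sub,
            HahnSeries.coeff_smul, hhj j hj, smul_eq_mul, mul_zero, sub_zero, hu'j j hj]
      refine ⟨⟨g - ((g i).coeff (u i) / c) • h,
        Submodule.sub_mem _ ⟨hgI, hgstdu⟩ (Submodule.smul_mem _ _ ⟨hhI, hhstd⟩), heq⟩, ?_⟩
      simp only [SetLike.mem_coe, mem_hyp, psi_apply, hu'i]
      exact hyH
  rw [finrank_decomp i V' hsV', finrank_decomp i V hsV, hVH]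

include hν hlam in
lemma case1 {u : Fin p → ℤ} {i : Fin p} (h1 : u i < lam i) :
    cI I (fun j => u j - if j = i then 1 else 0) = cI I u := by
  set u' : Fin p → ℤ := fun j => u j - if j = i then 1 else 0 with hu'def
  have e1 : I ⊓ stdMod p u' = I ⊓ stdMod p u :=
    inf_stdMod_eq_of_lt_lam I ν lam hν hlam i u' u
      (fun j hj => by simp [hu'def, if_neg hj]) (by simp [hu'def]) (by simp [hu'def]; omega)
  have e2 : I ⊓ stdMod p (u' + 1) = I ⊓ stdMod p (u + 1) :=
    inf_stdMod_eq_of_lt_lam I ν lam hν hlam i (u' + 1) (u + 1)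
      (fun j hj => by simp [hu'def, if_neg hj]) (by simp [hu'def])
      (by simp [hu'def]; omega)
  rw [cI, cI, e1, e2]

include hν hlam in
lemma alpha_vanish (hp : 1 ≤ p) {v : Fin p → ℤ} (hv : ¬(lam ≤ v ∧ v ≤ ν)) :
    alphaI I v = 0 := by
  obtain ⟨i, hi⟩ : ∃ i, v i < lam i ∨ ν i < v i := by
    by_contra hc
    push_neg at hc
    exact hv ⟨fun i => (hc i).1, fun i => (hc i).2⟩
  have key : ∀ J : Finset (Fin p), i ∉ J →
      cI I (fun j => v j - if j ∈ insert i J then 1 else 0)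
        = cI I (fun j => v j - if j ∈ J then 1 else 0) := by
    intro J hiJ
    have hfun : (fun j => v j - if j ∈ insert i J then 1 else 0)
        = (fun j => (fun j' => v j' - if j' ∈ J then 1 else 0) j - if j = i then 1 else 0) := by
      funext j
      by_cases hj : j = i
      · subst hj; simp [Finset.mem_insert, hiJ]
      · simp [Finset.mem_insert, hj]
    rw [hfun]
    set u : Fin p → ℤ := fun j => v j - if j ∈ J then 1 else 0 with hudef
    have hui : u i = v i := by simp [u, hiJ]
    rcases hi with h | h
    · exact case1 I ν lam hν hlam (by rw [hui]; exact h)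
    · exact case2 I ν hν (by rw [hui]; exact h)
  unfold alphaI
  apply Finset.sum_ninvolution (g := fun J => if i ∈ J then J.erase i else insert i J)
  · intro J
    by_cases hiJ : i ∈ J
    · simp only [if_pos hiJ]
      set J' := J.erase i with hJ'
      have hiJ' : i ∉ J' := Finset.notMem_erase i J
      have hins : insert i J' = J := Finset.insert_erase hiJ
      have hcard : J.card = J'.card + 1 := by
        rw [← hins, Finset.card_insert_of_notMem hiJ']
      have hle : J'.card < p := by
        have h1 : J.card ≤ p := by
          simpa using Finset.card_le_univ J
        omega
      have hc := key J' hiJ'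
      rw [hins] at hc
      rw [hc, hcard]
      have : p - J'.card = (p - (J'.card + 1)) + 1 := by omega
      rw [this, pow_succ]
      ring
    · simp only [if_neg hiJ]
      have hcard : (insert i J).card = J.card + 1 := Finset.card_insert_of_notMem hiJ
      have hle : J.card < p := by
        have h1 : (insert i J).card ≤ p := by
          simpa using Finset.card_le_univ (insert i J)
        omega
      rw [key J hiJ, hcard]
      have : p - J.card = (p - (J.card + 1)) + 1 := by omega
      rw [this, pow_succ]
      ring
  · intro J _
    by_cases hiJ : i ∈ J
    · simp only [if_pos hiJ]
      intro h
      rw [← h] at hiJ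
      exact Finset.notMem_erase i J hiJ
    · simp only [if_neg hiJ]
      intro h
      rw [← h] at hiJ
      exact hiJ (Finset.mem_insert_self i J)
  · intro J; exact Finset.mem_univ _
  · intro J
    by_cases hiJ : i ∈ J
    · simp [hiJ, Finset.insert_erase hiJ]
    · simp [hiJ, Finset.erase_insert hiJ]

end Main


/-- **The Poincaré series of a fractional ideal is a polynomial**: `α_I(v)`
vanishes outside the box `λ ≤ v ≤ ν`, hence has finite support. -/
theorem alphaI_finite_support {p : ℕ} (hp : 1 ≤ p) (O : Subalgebra ℂ (KK p))
    (hO : (O : Set (KK p)) ⊆ (stdMod p 0 : Set (KK p)))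
    (I : Submodule ℂ (KK p)) (hI : IsFracIdeal O I)
    (ν lam : Fin p → ℤ)
    (hν : ∀ w : Fin p → ℤ, ν ≤ w → w ∈ vals (I : Set (KK p)))
    (hlam : ∀ w ∈ vals (I : Set (KK p)), lam ≤ w) :
    (∀ v : Fin p → ℤ, ¬(lam ≤ v ∧ v ≤ ν) → alphaI I v = 0) ∧
    {v : Fin p → ℤ | alphaI I v ≠ 0}.Finite := by
  have main : ∀ v : Fin p → ℤ, ¬(lam ≤ v ∧ v ≤ ν) → alphaI I v = 0 :=
    fun v hv => alpha_vanish I ν lam hν hlam hp hv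
  refine ⟨main, Set.Finite.subset (Set.finite_Icc lam ν) ?_⟩
  intro v hv
  simp only [Set.mem_setOf_eq] at hv
  by_contra hnot
  rw [Set.mem_Icc] at hnot
  exact hv (main v hnot)
end
end

section
/- Let I be a fractional ideal of O with O~ ⊆ I (as holds for the module of logarithmic residues of a reduced plane curve, since 0 + ℕ^p ⊆ val(I)). Then val(I) = {v ∈ val(I) : v ≤ 0} ∪ {v ∈ ℤ^p : inf(v, 0) ∈ val(I)}; in particular val(I) is determined by its subset of vectors with all coordinates ≤ 0. -/
open scoped Classical

set_option synthInstance.maxHeartbeats 1000000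
set_option maxHeartbeats 1000000

noncomputable section

lemma valC_eq_iff (g : LaurentSeries ℂ) (n : ℤ) :
    valC g = (n : WithTop ℤ) ↔ (g.coeff n ≠ 0 ∧ ∀ j < n, g.coeff j = 0) := by
  constructor
  · intro h
    rw [valC] at h
    split_ifs at h with hg
    · exact absurd h (by simp)
    · have hn : g.order = n := by exact_mod_cast h
      exact ⟨hn ▸ mt HahnSeries.coeff_order_eq_zero.1 hg,
        fun j hj => HahnSeries.coeff_eq_zero_of_lt_order (hn ▸ hj)⟩
  · rintro ⟨h1, h2⟩
    have hg : g ≠ 0 := fun h => h1 (by simp [h])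
    rw [valC, if_neg hg]
    have hle := HahnSeries.order_le_of_coeff_ne_zero h1
    have hge : n ≤ g.order :=
      not_lt.1 fun hlt => hg (HahnSeries.coeff_order_eq_zero.1 (h2 _ hlt))
    exact_mod_cast le_antisymm hle hge

lemma coeff_finsum (s : Finset ℤ) (f : ℤ → LaurentSeries ℂ) (j : ℤ) :
    (∑ k ∈ s, f k).coeff j = ∑ k ∈ s, (f k).coeff j := by
  classical
  induction s using Finset.induction with
  | empty => simp
  | insert a s h ih => simp [Finset.sum_insert h, ih]

/-- Forward: `v ∈ vals I → min(v,0) ∈ vals I`. -/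
lemma vals_min {p : ℕ} (I : Submodule ℂ (KK p))
    (h0 : (stdMod p 0 : Set (KK p)) ⊆ (I : Set (KK p)))
    (v : Fin p → ℤ) (hv : v ∈ vals (I : Set (KK p))) :
    (fun i => min (v i) 0) ∈ vals (I : Set (KK p)) := by
  obtain ⟨g, hgI, hgv⟩ := hv
  set h : KK p := fun i => if v i ≤ 0 then 0 else HahnSeries.single (0:ℤ) (1:ℂ) with hh
  have hhstd : h ∈ (stdMod p 0 : Set (KK p)) := by
    intro i j hj
    have hj' : j < (0:ℤ) := by simpa using hj
    simp only [hh]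
    split_ifs
    · simp
    · rw [HahnSeries.coeff_single_of_ne (by omega)]
  refine ⟨g + h, I.add_mem hgI (h0 hhstd), fun i => ?_⟩
  have := (valC_eq_iff (g i) (v i)).1 (hgv i)
  rw [valC_eq_iff]
  simp only [Pi.add_apply, HahnSeries.coeff_add, hh]
  by_cases hvi : v i ≤ 0
  · rw [min_eq_left hvi]
    simp only [if_pos hvi]
    exact ⟨by simpa using this.1, fun j hj => by simpa using this.2 j hj⟩
  · rw [min_eq_right (by omega)]
    simp only [if_neg hvi]
    constructor
    · rw [this.2 0 (by omega), HahnSeries.coeff_single_same]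
      norm_num
    · intro j hj
      rw [this.2 j (by omega), HahnSeries.coeff_single_of_ne (by omega)]
      ring

/-- Backward: `min(v,0) ∈ vals I → v ∈ vals I`. -/
lemma vals_of_min {p : ℕ} (I : Submodule ℂ (KK p))
    (h0 : (stdMod p 0 : Set (KK p)) ⊆ (I : Set (KK p)))
    (v : Fin p → ℤ) (hv : (fun i => min (v i) 0) ∈ vals (I : Set (KK p))) :
    v ∈ vals (I : Set (KK p)) := by
  obtain ⟨g, hgI, hgv⟩ := hv
  set h : KK p := fun i =>
    if v i ≤ 0 then 0 else
      HahnSeries.single (v i) (1 - (g i).coeff (v i)) -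
        ∑ j ∈ Finset.Ico (0:ℤ) (v i), HahnSeries.single j ((g i).coeff j)
    with hh
  have hhstd : h ∈ (stdMod p 0 : Set (KK p)) := by
    intro i j hj
    have hj' : j < (0:ℤ) := by simpa using hj
    simp only [hh]
    split_ifs with hvi
    · simp
    · rw [HahnSeries.coeff_sub, HahnSeries.coeff_single_of_ne (by omega), coeff_finsum]
      rw [Finset.sum_eq_zero, sub_zero]
      intro k hk
      rw [Finset.mem_Ico] at hk
      exact HahnSeries.coeff_single_of_ne (by omega)
  refine ⟨g + h, I.add_mem hgI (h0 hhstd), fun i => ?_⟩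
  have hmin := (valC_eq_iff (g i) (min (v i) 0)).1 (hgv i)
  rw [valC_eq_iff]
  simp only [Pi.add_apply, HahnSeries.coeff_add, hh]
  by_cases hvi : v i ≤ 0
  · have : min (v i) 0 = v i := min_eq_left hvi
    rw [this] at hmin
    simp only [if_pos hvi]
    exact ⟨by simpa using hmin.1, fun j hj => by simpa using hmin.2 j hj⟩
  · have hm0 : min (v i) 0 = 0 := min_eq_right (by omega)
    rw [hm0] at hmin
    simp only [if_neg hvi]
    have hsum : ∀ j : ℤ, (∑ k ∈ Finset.Ico (0:ℤ) (v i),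
        HahnSeries.single k ((g i).coeff k)).coeff j =
        if j ∈ Finset.Ico (0:ℤ) (v i) then (g i).coeff j else 0 := by
      intro j
      rw [coeff_finsum]
      simp only [HahnSeries.coeff_single]
      convert Finset.sum_ite_eq (Finset.Ico (0:ℤ) (v i)) j (fun k : ℤ => (g i).coeff k) using 2
      congr
    constructor
    · rw [HahnSeries.coeff_sub, HahnSeries.coeff_single_same, hsum,
        if_neg (by simp), ]
      ring_nf
      norm_num
    · intro j hj
      rw [HahnSeries.coeff_sub, HahnSeries.coeff_single_of_ne (by omega), hsum]
      by_cases hj0 : 0 ≤ j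
      · rw [if_pos (Finset.mem_Ico.2 ⟨hj0, hj⟩)]
        ring
      · rw [if_neg (by simp; omega), hmin.2 j (by omega)]
        ring

/-- The value set of a fractional ideal containing `O~` is determined by its
vectors with nonpositive coordinates. -/
theorem vals_eq_nonpos_union {p : ℕ} (hp : 1 ≤ p) (O : Subalgebra ℂ (KK p))
    (hO : (O : Set (KK p)) ⊆ (stdMod p 0 : Set (KK p)))
    (I : Submodule ℂ (KK p)) (hI : IsFracIdeal O I)
    (h0 : (stdMod p 0 : Set (KK p)) ⊆ (I : Set (KK p))) :
    vals (I : Set (KK p)) =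
      {v ∈ vals (I : Set (KK p)) | v ≤ 0} ∪
        {v : Fin p → ℤ | (fun i => min (v i) 0) ∈ vals (I : Set (KK p))} := by
  ext v
  constructor
  · intro hv
    exact Or.inr (vals_min I h0 v hv)
  · rintro (⟨hv, -⟩ | hv)
    · exact hv
    · exact vals_of_min I h0 v hv
end
end
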